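/- For Δ ≥ D ≥ 3, the cycle prefix digraph Γ_Δ(D) is D-reachable: between any two (not necessarily distinct) vertices there is a directed walk of length exactly D. -/

import Mathlib

/-- `l` is a vertex of the cycle prefix digraph `Γ_Δ(D)`: a sequence of `D`
distinct letters from the alphabet `{1, …, Δ+1}`. -/
def IsVtx (Δ D : ℕ) (l : List ℕ) : Prop :=
  l.length = D ∧ l.Nodup ∧ ∀ x ∈ l, 1 ≤ x ∧ x ≤ Δ + 1

/-- Adjacency in `Γ_Δ(D, -r)` (for `r = 0` this is `Γ_Δ(D)` itself): arcs are the
rotations `R_k` for `r+2 ≤ k ≤ D` (0-indexed: move the letter at index `j`,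
`r+1 ≤ j ≤ D-1`, to the front) and the shifts `S_y` for letters `y` not in the
sequence. -/
def adjR (Δ D r : ℕ) (X Y : List ℕ) : Prop :=
  IsVtx Δ D X ∧ IsVtx Δ D Y ∧
    ((∃ j, r + 1 ≤ j ∧ j < D ∧ Y = X.getD j 0 :: X.eraseIdx j) ∨
     (∃ y, y ∉ X ∧ Y = y :: X.dropLast))

/-- `w` is a directed walk of length `n` from `u` to `v` in the digraph with
adjacency relation `A`. -/
def IsWalk {V : Type*} (A : V → V → Prop) (u v : V) (n : ℕ) (w : ℕ → V) : Prop :=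
  w 0 = u ∧ w n = v ∧ ∀ i < n, A (w i) (w (i + 1))

/-- Directed distance: the least length of a directed walk from `u` to `v`. -/
noncomputable def cpDist {V : Type*} (A : V → V → Prop) (u v : V) : ℕ :=
  sInf {n | ∃ w, IsWalk A u v n w}

/-- One step of the construction: prepend `c`, via rotation if `c` is in the
sequence and via a shift otherwise. -/
def stepFn (s : List ℕ) (c : ℕ) : List ℕ :=
  if c ∈ s then c :: s.erase c else c :: s.dropLast

lemma stepFn_eq (s : List ℕ) (c : ℕ) :
    stepFn s c = c :: (if c ∈ s then s.erase c else s.dropLast) := by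
  unfold stepFn; split <;> rfl

lemma isWalk_cons {V : Type*} {A : V → V → Prop} {u x v : V} {n : ℕ} {w : ℕ → V}
    (h1 : A u x) (hw : IsWalk A x v n w) :
    IsWalk A u v (n + 1) (fun i => if i = 0 then u else w (i - 1)) := by
  obtain ⟨hw0, hwn, hws⟩ := hw
  refine ⟨rfl, by simp [hwn], ?_⟩
  intro i hi
  cases i with
  | zero => simpa [hw0] using h1
  | succ j =>
    simpa using hws j (by omega)

lemma adj_stepFn (Δ D : ℕ) (hD : 0 < D) (s : List ℕ) (c : ℕ)
    (hs : IsVtx Δ D s) (hc1 : 1 ≤ c) (hc2 : c ≤ Δ + 1) (hne : c ≠ s.headI) :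
    adjR Δ D 0 s (stepFn s c) ∧ IsVtx Δ D (stepFn s c) := by
  obtain ⟨hlen, hnd, hmem⟩ := hs
  have hsne : s ≠ [] := by
    intro h; rw [h] at hlen; simp at hlen; omega
  obtain ⟨a, t, rfl⟩ := List.exists_cons_of_ne_nil hsne
  have hca : c ≠ a := by simpa using hne
  have hvtx : IsVtx Δ D (stepFn (a :: t) c) := by
    unfold stepFn
    split_ifs with h
    · refine ⟨?_, ?_, ?_⟩
      · simp [List.length_erase_of_mem h, hlen]; omega
      · refine List.Nodup.cons ?_ (hnd.erase c)
        intro hmem'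
        exact ((hnd.mem_erase_iff).1 hmem').1 rfl
      · intro x hx
        rcases List.mem_cons.1 hx with rfl | hx
        · exact ⟨hc1, hc2⟩
        · exact hmem x (List.mem_of_mem_erase hx)
    · refine ⟨?_, ?_, ?_⟩
      · simp [List.length_dropLast] at *; omega
      · refine List.Nodup.cons ?_ ((List.dropLast_sublist _).nodup hnd)
        intro hmem'
        exact h ((List.dropLast_sublist _).mem hmem')
      · intro x hx
        rcases List.mem_cons.1 hx with rfl | hx
        · exact ⟨hc1, hc2⟩
        · exact hmem x ((List.dropLast_sublist _).mem hx)
  refine ⟨⟨⟨hlen, hnd, hmem⟩, hvtx, ?_⟩, hvtx⟩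
  unfold stepFn
  split_ifs with h
  · left
    refine ⟨List.idxOf c (a :: t), ?_, ?_, ?_⟩
    · rw [List.idxOf_cons_ne _ (Ne.symm hca)]; omega
    · rw [← hlen]; exact List.idxOf_lt_length_iff.2 h
    · rw [List.eraseIdx_idxOf_eq_erase,
        List.getD_eq_getElem _ _ (List.idxOf_lt_length_iff.2 h),
        List.getElem_idxOf]
  · right
    exact ⟨c, h, rfl⟩

/-- The main induction: if the current vertex has the (nonempty) suffix `p` of
`v` as a prefix, we can reach `v` in exactly `q.length` steps where `v = q ++ p`. -/
lemma walk_from_suffix (Δ D : ℕ) (v : List ℕ) (hv : IsVtx Δ D v) :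
    ∀ q p r : List ℕ, v = q ++ p → p ≠ [] → IsVtx Δ D (p ++ r) →
    ∃ w, IsWalk (adjR Δ D 0) (p ++ r) v q.length w := by
  intro q
  induction q using List.reverseRecOn with
  | nil =>
    intro p r hqp hp hvtx
    have hr : r = [] := by
      have h1 : v.length = D := hv.1
      have h2 : (p ++ r).length = D := hvtx.1
      rw [hqp] at h1
      simp at h1 h2
      have : r.length = 0 := by omega
      exact List.length_eq_zero_iff.1 this
    subst hr
    refine ⟨fun _ => v, by simp [hqp], by simp, by simp⟩
  | append_singleton q' a ih =>
    intro p r hqp hp hvtx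
    have hD : 0 < D := by
      have := hvtx.1
      rcases p with _ | ⟨b, p'⟩
      · exact absurd rfl hp
      · simp at this; omega
    obtain ⟨b, p', rfl⟩ := List.exists_cons_of_ne_nil hp
    have hqp' : v = q' ++ a :: (b :: p') := by
      rw [hqp]; simp
    have hnav : (a :: b :: p').Nodup := by
      have := hv.2.1
      rw [hqp'] at this
      exact this.of_append_right
    have hab : a ≠ b := by
      have := (List.nodup_cons.1 hnav).1
      intro h; exact this (h ▸ List.mem_cons_self)
    have hanp : a ∉ b :: p' := (List.nodup_cons.1 hnav).1
    have hamem : a ∈ v := by rw [hqp]; simp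
    obtain ⟨ha1, ha2⟩ := hv.2.2 a hamem
    have hne : a ≠ ((b :: p') ++ r).headI := by simpa using hab
    obtain ⟨hadj, hvtx'⟩ := adj_stepFn Δ D hD _ a hvtx ha1 ha2 hne
    have hform : ∃ r', stepFn ((b :: p') ++ r) a = (a :: b :: p') ++ r' := by
      rw [stepFn_eq]
      split_ifs with h
      · have : a ∈ r := by
          rcases List.mem_append.1 h with h' | h'
          · exact absurd h' hanp
          · exact h'
        exact ⟨r.erase a, by rw [List.erase_append_right _ hanp]; simp⟩
      · have hrne : r ≠ [] := by
          intro hre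
          subst hre
          have h1 : v.length = D := hv.1
          have h2 : ((b :: p') ++ ([] : List ℕ)).length = D := hvtx.1
          rw [hqp] at h1
          simp at h1 h2
          omega
        exact ⟨r.dropLast, by rw [List.dropLast_append_of_ne_nil hrne]; simp⟩
    obtain ⟨r', hr'⟩ := hform
    rw [hr'] at hadj hvtx'
    obtain ⟨w, hw⟩ := ih (a :: b :: p') r' hqp' (by simp) hvtx'
    have h3 := isWalk_cons hadj hw
    exact ⟨_, by simpa using h3⟩

/-- for `Δ ≥ D ≥ 3`, the cycle prefix digraph is `D`-reachable. -/
theorem cpn_reachable (Δ D : ℕ) (hD : 3 ≤ D) (hΔ : D ≤ Δ)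
    (u v : List ℕ) (hu : IsVtx Δ D u) (hv : IsVtx Δ D v) :
    ∃ w, IsWalk (adjR Δ D 0) u v D w := by
  have hD0 : 0 < D := by omega
  have hvne : v ≠ [] := by
    intro h; rw [h] at hv; have := hv.1; simp at this; omega
  have hune : u ≠ [] := by
    intro h; rw [h] at hu; have := hu.1; simp at this; omega
  -- split off the last three letters of `v`
  set n := D - 3 with hn
  have hnD : n ≤ D := by omega
  have hlen3 : (v.drop n).length = 3 := by rw [List.length_drop, hv.1]; omega
  obtain ⟨x, y, z, hxyz⟩ := List.length_eq_three.1 hlen3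
  have hndxyz : [x, y, z].Nodup := hxyz ▸ ((List.drop_sublist n v).nodup hv.2.1)
  have hxy : x ≠ y := by simp at hndxyz; tauto
  have hxz : x ≠ z := by simp at hndxyz; tauto
  have hyz : y ≠ z := by simp at hndxyz; tauto
  have hxv : x ∈ v := (List.drop_sublist n v).mem (by rw [hxyz]; simp)
  have hyv : y ∈ v := (List.drop_sublist n v).mem (by rw [hxyz]; simp)
  have hzv : z ∈ v := (List.drop_sublist n v).mem (by rw [hxyz]; simp)
  obtain ⟨hx1, hx2⟩ := hv.2.2 x hxv
  obtain ⟨hy1, hy2⟩ := hv.2.2 y hyv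
  obtain ⟨hz1, hz2⟩ := hv.2.2 z hzv
  have hvsplit : v = v.take n ++ [x, y, z] := by
    rw [← hxyz]; exact (List.take_append_drop n v).symm
  have hlentake : (v.take n).length = n := by
    rw [List.length_take, hv.1]; omega
  by_cases hcase : u.headI = z
  · -- hard case: the last letter of `v` is at the front of `u`
    obtain ⟨u0, u', rfl⟩ := List.exists_cons_of_ne_nil hune
    have hz0 : u0 = z := by simpa using hcase
    subst hz0
    have hu'len : u'.length = D - 1 := by
      have := hu.1; simp at this; omega
    -- step 1 : prepend x
    obtain ⟨hadj1, hvtx1⟩ := adj_stepFn Δ D hD0 (u0 :: u') x hu hx1 hx2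
      (by simpa using hxz)
    obtain ⟨m1, hm1⟩ : ∃ m1, stepFn (u0 :: u') x = x :: u0 :: m1 := by
      rw [stepFn_eq]
      split_ifs with h
      · exact ⟨u'.erase x, by rw [List.erase_cons_tail (by simpa using Ne.symm hxz)]⟩
      · have hu' : u' ≠ [] := by
          intro h'; rw [h'] at hu'len; simp at hu'len; omega
        refine ⟨u'.dropLast, ?_⟩
        rw [show u0 :: u' = [u0] ++ u' from rfl,
          List.dropLast_append_of_ne_nil hu']
        simp
    rw [hm1] at hadj1 hvtx1
    have hm1len : m1.length = D - 2 := by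
      have := hvtx1.1; simp at this; omega
    -- step 2 : prepend y
    obtain ⟨hadj2, hvtx2⟩ := adj_stepFn Δ D hD0 (x :: u0 :: m1) y hvtx1 hy1 hy2
      (by simpa using Ne.symm hxy)
    obtain ⟨m2, hm2⟩ : ∃ m2, stepFn (x :: u0 :: m1) y = y :: x :: u0 :: m2 := by
      rw [stepFn_eq]
      split_ifs with h
      · exact ⟨m1.erase y, by
          rw [List.erase_cons_tail (by simpa using hxy),
            List.erase_cons_tail (by simpa using Ne.symm hyz)]⟩
      · have hm1ne : m1 ≠ [] := by
          intro h'; rw [h'] at hm1len; simp at hm1len; omega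
        refine ⟨m1.dropLast, ?_⟩
        rw [show x :: u0 :: m1 = [x, u0] ++ m1 from rfl,
          List.dropLast_append_of_ne_nil hm1ne]
        simp
    rw [hm2] at hadj2 hvtx2
    -- step 3 : prepend x again (rotation)
    obtain ⟨hadj3, hvtx3⟩ := adj_stepFn Δ D hD0 (y :: x :: u0 :: m2) x hvtx2 hx1 hx2
      (by simpa using hxy)
    have hs3 : stepFn (y :: x :: u0 :: m2) x = x :: y :: u0 :: m2 := by
      rw [stepFn_eq, if_pos (by simp)]
      rw [List.erase_cons_tail (by simpa using Ne.symm hxy), List.erase_cons_head]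
    rw [hs3] at hadj3 hvtx3
    -- remaining D - 3 steps
    obtain ⟨w, hw⟩ := walk_from_suffix Δ D v hv (v.take n) [x, y, u0] m2
      hvsplit (by simp) (by simpa using hvtx3)
    rw [hlentake] at hw
    have h3 := isWalk_cons hadj3 hw
    have h2 := isWalk_cons hadj2 h3
    have h1 := isWalk_cons hadj1 h2
    have hlenfin : n + 1 + 1 + 1 = D := by omega
    rw [hlenfin] at h1
    exact ⟨_, h1⟩
  · -- easy case: prepend z, then the rest
    obtain ⟨hadj1, hvtx1⟩ := adj_stepFn Δ D hD0 u z hu hz1 hz2 (fun h => hcase h.symm)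
    obtain ⟨r, hr⟩ : ∃ r, stepFn u z = [z] ++ r := by
      rw [stepFn_eq]; exact ⟨_, rfl⟩
    rw [hr] at hadj1 hvtx1
    have hvsplit' : v = (v.take n ++ [x, y]) ++ [z] := by
      rw [List.append_assoc]; exact hvsplit
    obtain ⟨w, hw⟩ := walk_from_suffix Δ D v hv (v.take n ++ [x, y]) [z] r
      hvsplit' (by simp) hvtx1
    rw [show (v.take n ++ [x, y]).length = n + 2 by simp [hlentake]] at hw
    have h1 := isWalk_cons hadj1 hw
    have hlenfin : n + 2 + 1 = D := by omega
    rw [hlenfin] at h1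
    exact ⟨_, h1⟩
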